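/- Let (A, U) be an H-pair (A a local algebra of dimension n+2 with maximal ideal m, U ⊆ m a subspace of dimension n generating A) and let F be an invariant d-linear symmetric form on A. Then the kernel Ker F = {x ∈ A : F(x, z_2,...,z_d) = 0 for all z_i ∈ A} is the maximal ideal of A contained in U. -/

import Mathlib

private theorem core_vanish {K A : Type*} [Field K] [CharZero K] [CommRing A] [Algebra K A]
    {d : ℕ} (F : MultilinearMap K (fun _ : Fin d => A) K)
    (hsym : ∀ (σ : Equiv.Perm (Fin d)) (z : Fin d → A), F (z ∘ σ) = F z)
    (U : Submodule K A)
    (hinv : ∀ u ∈ U, ∀ z : Fin d → A,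
      ∑ i, F (Function.update z i (u * z i)) = 0)
    (z : Fin d → A) (i₀ : Fin d) (hzU : z i₀ ∈ U)
    (hside : ∀ i, i ≠ i₀ → z i ≠ 1 →
      F (Function.update (Function.update z i₀ 1) i (z i₀ * z i)) = 0) :
    F z = 0 := by
  classical
  have h := hinv (z i₀) hzU (Function.update z i₀ 1)
  have hterm : ∀ i : Fin d,
      F (Function.update (Function.update z i₀ 1) i
          (z i₀ * Function.update z i₀ 1 i)) =
        if i ≠ i₀ ∧ z i ≠ 1 then 0 else F z := by
    intro i
    by_cases h1 : i = i₀
    · subst h1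
      rw [if_neg (by simp), Function.update_self, mul_one, Function.update_idem,
        Function.update_eq_self]
    · rw [Function.update_of_ne h1]
      by_cases h2 : z i = 1
      · have hif : ¬ (i ≠ i₀ ∧ z i ≠ 1) := by tauto
        rw [if_neg hif, h2, mul_one]
        have heq : Function.update (Function.update z i₀ 1) i (z i₀)
            = z ∘ (Equiv.swap i i₀) := by
          funext j
          rcases eq_or_ne j i with rfl | hji
          · simp [Equiv.swap_apply_left]
          · rcases eq_or_ne j i₀ with rfl | hj0
            · simp only [Function.comp_apply, Equiv.swap_apply_right, h2]
              rw [Function.update_of_ne hji, Function.update_self]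
            · simp only [Function.comp_apply, Equiv.swap_apply_of_ne_of_ne hji hj0]
              rw [Function.update_of_ne hji, Function.update_of_ne hj0]
        rw [heq, hsym]
      · rw [if_pos ⟨h1, h2⟩]; exact hside i h1 h2
  rw [Finset.sum_congr rfl (fun i _ => hterm i)] at h
  rw [Finset.sum_ite, Finset.sum_const_zero, Finset.sum_const, zero_add] at h
  have hmem : i₀ ∈ Finset.univ.filter (fun i => ¬ (i ≠ i₀ ∧ z i ≠ 1)) := by simp
  have hcard := Finset.card_ne_zero_of_mem hmem
  have hK : ((Finset.univ.filter (fun i => ¬ (i ≠ i₀ ∧ z i ≠ 1))).card : K) * F z = 0 := by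
    rw [← nsmul_eq_mul]; exact h
  rcases mul_eq_zero.1 hK with h' | h'
  · exact absurd (Nat.cast_eq_zero.1 h') hcard
  · exact h'

theorem kernel_of_invariant_form_is_maximal_ideal_in_U
    {K A : Type*} [Field K] [IsAlgClosed K] [CharZero K]
    [CommRing A] [Algebra K A] [FiniteDimensional K A] [IsLocalRing A]
    {n d : ℕ} (hd : 0 < d)
    (hA : Module.finrank K A = n + 2)
    (U : Submodule K A)
    (hU : U ≤ Submodule.restrictScalars K (IsLocalRing.maximalIdeal A))
    (hUdim : Module.finrank K U = n)
    (hgen : Algebra.adjoin K (U : Set A) = ⊤)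
    (F : MultilinearMap K (fun _ : Fin d => A) K)
    (hF0 : F ≠ 0)
    (hsym : ∀ (σ : Equiv.Perm (Fin d)) (z : Fin d → A), F (z ∘ σ) = F z)
    (hone : F (fun _ => 1) = 0)
    (hinv : ∀ u ∈ U, ∀ z : Fin d → A,
      ∑ i, F (Function.update z i (u * z i)) = 0) :
    ∃ J : Ideal A,
      (J : Set A) =
        {x : A | ∀ z : Fin d → A, F (Function.update z ⟨0, hd⟩ x) = 0} ∧
      Submodule.restrictScalars K J ≤ U ∧
      ∀ J' : Ideal A, Submodule.restrictScalars K J' ≤ U → J' ≤ J := by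
  classical
  set i0 : Fin d := ⟨0, hd⟩ with hi0def
  set KS : Set A := {x : A | ∀ z : Fin d → A, F (Function.update z i0 x) = 0} with hKSdef
  -- transport kernel property to any slot
  have hker_any : ∀ x ∈ KS, ∀ (z : Fin d → A) (i : Fin d), F (Function.update z i x) = 0 := by
    intro x hx z i
    have h1 := hsym (Equiv.swap i0 i) (Function.update z i x)
    rw [Function.update_comp_equiv, Equiv.symm_swap, Equiv.swap_apply_right] at h1
    rw [← h1]; exact hx _
  have hadd : ∀ x ∈ KS, ∀ y ∈ KS, x + y ∈ KS := by
    intro x hx y hy z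
    rw [F.map_update_add, hx z, hy z, add_zero]
  have hzero : (0 : A) ∈ KS := fun z => F.map_update_zero z i0
  have hsmul : ∀ (c : K), ∀ x ∈ KS, c • x ∈ KS := by
    intro c x hx z
    rw [F.map_update_smul, hx z, smul_zero]
  have hUmul : ∀ u ∈ U, ∀ x ∈ KS, u * x ∈ KS := by
    intro u hu x hx z
    have h := hinv u hu (Function.update z i0 x)
    rw [Finset.sum_eq_single i0] at h
    · rw [Function.update_self, Function.update_idem] at h
      exact h
    · intro i _ hi
      rw [Function.update_comm (Ne.symm hi)]
      exact hker_any x hx _ i0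
    · intro habs; exact absurd (Finset.mem_univ i0) habs
  have hAmul : ∀ (a : A), ∀ x ∈ KS, a * x ∈ KS := by
    have key : ∀ a, ∀ ha : a ∈ Algebra.adjoin K (U : Set A), ∀ x ∈ KS, a * x ∈ KS := by
      intro a ha
      induction ha using Algebra.adjoin_induction with
      | mem u hu => exact hUmul u hu
      | algebraMap r =>
        intro x hx
        rw [Algebra.algebraMap_eq_smul_one, smul_mul_assoc, one_mul]
        exact hsmul r x hx
      | add p q hp hq ihp ihq =>
        intro x hx
        rw [add_mul]
        exact hadd _ (ihp x hx) _ (ihq x hx)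
      | mul p q hp hq ihp ihq =>
        intro x hx
        rw [mul_assoc]
        exact ihp _ (ihq x hx)
    intro a
    exact key a (by rw [hgen]; trivial)
  set J : Ideal A :=
    { carrier := KS
      add_mem' := fun {x y} hx hy => hadd x hx y hy
      zero_mem' := hzero
      smul_mem' := fun a {x} hx => by
        simpa [smul_eq_mul] using hAmul a x hx } with hJdef
  have hmemJ : ∀ x : A, x ∈ J ↔ x ∈ KS := fun x => Iff.rfl
  have h1K : (1 : A) ∉ KS := by
    intro h1
    apply hF0
    apply MultilinearMap.ext
    intro z
    have hz : z i0 ∈ KS := by simpa using hAmul (z i0) 1 h1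
    simpa [Function.update_eq_self] using hz z
  have hJne : J ≠ ⊤ := fun h => h1K ((Ideal.eq_top_iff_one J).1 h)
  have hJm : J ≤ IsLocalRing.maximalIdeal A := IsLocalRing.le_maximalIdeal hJne

  have hmax : ∀ J' : Ideal A, Submodule.restrictScalars K J' ≤ U → J' ≤ J := by
    intro J' hJ' x hxJ'
    have hx : ∀ a : A, x * a ∈ U := fun a => hJ' (Ideal.mul_mem_right a J' hxJ')
    have claimA : ∀ s : ℕ, ∀ (z : Fin d → A) (i₁ : Fin d) (a : A), z i₁ = x * a →
        ((Finset.univ.filter (fun i => i ≠ i₁ ∧ z i ≠ 1)).card ≤ s) → F z = 0 := by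
      intro s
      induction s with
      | zero =>
        intro z i₁ a hza hcard
        refine core_vanish F hsym U hinv z i₁ (by rw [hza]; exact hx a) ?_
        intro i hi hzi
        exfalso
        have hmem : i ∈ Finset.univ.filter (fun i => i ≠ i₁ ∧ z i ≠ 1) := by
          simp [hi, hzi]
        have := Finset.card_pos.2 ⟨i, hmem⟩
        omega
      | succ s ih =>
        intro z i₁ a hza hcard
        refine core_vanish F hsym U hinv z i₁ (by rw [hza]; exact hx a) ?_
        intro i hi hzi
        refine ih (Function.update (Function.update z i₁ 1) i (z i₁ * z i)) i (a * z i) ?_ ?_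
        · rw [Function.update_self, hza, mul_assoc]
        · have hsub : (Finset.univ.filter (fun j => j ≠ i ∧
              Function.update (Function.update z i₁ 1) i (z i₁ * z i) j ≠ 1))
              ⊆ (Finset.univ.filter (fun j => j ≠ i₁ ∧ z j ≠ 1)).erase i := by
            intro j hj
            simp only [Finset.mem_filter, Finset.mem_univ, true_and] at hj
            obtain ⟨hji, hjv⟩ := hj
            rw [Function.update_of_ne hji] at hjv
            rcases eq_or_ne j i₁ with rfl | hj1
            · rw [Function.update_self] at hjv; exact absurd rfl hjv
            · rw [Function.update_of_ne hj1] at hjv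
              refine Finset.mem_erase.2 ⟨hji, ?_⟩
              simp [hj1, hjv]
          have h1 : i ∈ Finset.univ.filter (fun j => j ≠ i₁ ∧ z j ≠ 1) := by
            simp [hi, hzi]
          have h2 := Finset.card_le_card hsub
          rw [Finset.card_erase_of_mem h1] at h2
          have h3 := Finset.card_pos.2 ⟨i, h1⟩
          omega
    show x ∈ KS
    intro z
    refine claimA d (Function.update z i0 x) i0 1 (by rw [Function.update_self, mul_one]) ?_
    refine le_trans (Finset.card_filter_le _ _) ?_
    simp

  set m' : Submodule K A := Submodule.restrictScalars K (IsLocalRing.maximalIdeal A) with hm'def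
  by_cases hKU : Submodule.restrictScalars K J ≤ U
  · exact ⟨J, rfl, hKU, hmax⟩
  exfalso
  have hKJm : Submodule.restrictScalars K J ≤ m' := fun y hy => hJm hy
  have h1m : (1 : A) ∉ m' := by
    intro h
    exact (IsLocalRing.maximalIdeal.isMaximal A).ne_top ((Ideal.eq_top_iff_one _).2 h)
  have hm'ne : m' ≠ ⊤ := fun h => h1m (h ▸ Submodule.mem_top)
  have hrm : Module.finrank K m' < n + 2 := by
    rw [← hA]; exact Submodule.finrank_lt hm'ne
  have hUlt : U < U ⊔ Submodule.restrictScalars K J := by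
    rcases lt_or_eq_of_le (le_sup_left : U ≤ U ⊔ Submodule.restrictScalars K J) with h | h
    · exact h
    · exact absurd (le_trans le_sup_right h.ge) hKU
  have hfr1 : n + 1 ≤ Module.finrank K ↥(U ⊔ Submodule.restrictScalars K J) := by
    have h := Submodule.finrank_lt_finrank_of_lt hUlt
    rw [hUdim] at h
    omega
  have hsuple : U ⊔ Submodule.restrictScalars K J ≤ m' := sup_le hU hKJm
  have hfrmono : Module.finrank K ↥(U ⊔ Submodule.restrictScalars K J) ≤ Module.finrank K ↥m' :=
    Submodule.finrank_mono hsuple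
  have hsupeq : U ⊔ Submodule.restrictScalars K J = m' :=
    Submodule.eq_of_le_of_finrank_le hsuple (by omega)
  have hfrm : Module.finrank K ↥m' = n + 1 := by omega
  have hone_ne : (1 : A) ≠ 0 := one_ne_zero
  have hdisj : Submodule.span K {(1 : A)} ⊓ m' = ⊥ := by
    rw [Submodule.eq_bot_iff]
    intro y hy
    obtain ⟨hy1, hy2⟩ := Submodule.mem_inf.1 hy
    obtain ⟨c, rfl⟩ := Submodule.mem_span_singleton.1 hy1
    by_contra hne
    have hc : c ≠ 0 := by rintro rfl; simp at hne
    have h1 : (1 : A) ∈ m' := by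
      have hs := m'.smul_mem c⁻¹ hy2
      rwa [smul_smul, inv_mul_cancel₀ hc, one_smul] at hs
    exact h1m h1
  have hspan1 : Module.finrank K ↥(Submodule.span K {(1:A)}) = 1 :=
    finrank_span_singleton hone_ne
  have htopfr : Module.finrank K ↥(Submodule.span K {(1:A)} ⊔ m') = n + 2 := by
    have h := Submodule.finrank_sup_add_finrank_inf_eq (Submodule.span K {(1:A)}) m'
    rw [hdisj, hspan1, hfrm] at h
    rw [finrank_bot] at h
    omega
  have htop : Submodule.span K {(1:A)} ⊔ m' = ⊤ :=
    Submodule.eq_top_of_finrank_eq (by rw [htopfr, hA])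
  -- weight function
  set wt : A → ℕ := fun a => if a = 1 then 0 else if a ∈ m' then 1 else 2 with hwt
  have wt_one : wt 1 = 0 := by simp [hwt]
  have wt_le_two : ∀ a, wt a ≤ 2 := by
    intro a; simp only [hwt]; split_ifs <;> omega
  have wt_mem : ∀ a, a ∈ m' → wt a ≤ 1 := by
    intro a ha
    rcases eq_or_ne a 1 with rfl | h1
    · simp [hwt]
    · simp [hwt, h1, ha]
  have wt_two : ∀ a, a ≠ 1 → a ∉ m' → wt a = 2 := by
    intro a h1 h2; simp [hwt, h1, h2]
  have wt_eq_zero : ∀ a, wt a = 0 → a = 1 := by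
    intro a h
    by_contra h1
    rcases Classical.em (a ∈ m') with h2 | h2 <;> simp [hwt, h1, h2] at h
  have wt_eq_one_of : ∀ a, a ≠ 1 → a ∈ m' → wt a = 1 := by
    intro a h1 h2; simp [hwt, h1, h2]
  -- measure of an update
  have hms : ∀ (f : Fin d → A) (j : Fin d) (v : A),
      (∑ t, wt (Function.update f j v t)) + wt (f j) = (∑ t, wt (f t)) + wt v := by
    intro f j v
    have e1 : ∀ t ∈ Finset.univ, wt (Function.update f j v t)
        = Function.update (fun t => wt (f t)) j (wt v) t := by
      intro t _
      rcases eq_or_ne t j with rfl | h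
      · simp
      · rw [Function.update_of_ne h, Function.update_of_ne h]
    rw [Finset.sum_congr rfl e1, Finset.sum_update_of_mem (Finset.mem_univ j),
      ← Finset.add_sum_erase _ _ (Finset.mem_univ j)]
    have hsd : (Finset.univ : Finset (Fin d)) \ {j} = Finset.univ.erase j := by
      ext t; simp [and_comm]
    rw [hsd]
    omega
  have claimC : ∀ N : ℕ, ∀ z : Fin d → A, (∑ t, wt (z t)) ≤ N → F z = 0 := by
    intro N
    induction N with
    | zero =>
      intro z hz
      have hz1 : ∀ t, z t = 1 := by
        intro t
        exact wt_eq_zero _ (Finset.sum_eq_zero_iff.1 (Nat.le_zero.1 hz) t (Finset.mem_univ t))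
      have : z = fun _ => (1:A) := funext hz1
      rw [this]; exact hone
    | succ N ih =>
      intro z hz
      by_cases hb : ∃ i₁, z i₁ ≠ 1 ∧ z i₁ ∉ m'
      · obtain ⟨i₁, hne, hnm⟩ := hb
        have hw2 : wt (z i₁) = 2 := wt_two _ hne hnm
        have hzt : z i₁ ∈ Submodule.span K {(1:A)} ⊔ m' := htop ▸ Submodule.mem_top
        obtain ⟨p, hp, w, hw, hpw⟩ := Submodule.mem_sup.1 hzt
        obtain ⟨c, rfl⟩ := Submodule.mem_span_singleton.1 hp
        have hdecomp : F z = c • F (Function.update z i₁ 1) + F (Function.update z i₁ w) := by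
          rw [← F.map_update_smul, ← F.map_update_add, hpw, Function.update_eq_self]
        have e1 := hms z i₁ 1
        have e2 := hms z i₁ w
        have hww : wt w ≤ 1 := wt_mem _ hw
        have hm1 : (∑ t, wt (Function.update z i₁ 1 t)) ≤ N := by omega
        have hm2 : (∑ t, wt (Function.update z i₁ w t)) ≤ N := by omega
        rw [hdecomp, ih _ hm1, ih _ hm2, smul_zero, add_zero]
      · push_neg at hb
        by_cases hall : ∀ i, z i = 1
        · have : z = fun _ => (1:A) := funext hall
          rw [this]; exact hone
        · push_neg at hall
          obtain ⟨i₁, hne⟩ := hall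
          have hzm : z i₁ ∈ m' := hb i₁ hne
          have hzm2 : z i₁ ∈ U ⊔ Submodule.restrictScalars K J := hsupeq ▸ hzm
          obtain ⟨u, hu, y, hy, huy⟩ := Submodule.mem_sup.1 hzm2
          have hyK : y ∈ KS := hy
          have hdecomp : F z = F (Function.update z i₁ u) + F (Function.update z i₁ y) := by
            rw [← F.map_update_add, huy, Function.update_eq_self]
          have hFy : F (Function.update z i₁ y) = 0 := hker_any y hyK z i₁
          have hFu : F (Function.update z i₁ u) = 0 := by
            refine core_vanish F hsym U hinv _ i₁ (by rw [Function.update_self]; exact hu) ?_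
            intro i hii hzi
            rw [Function.update_idem, Function.update_self, Function.update_of_ne hii]
            rw [Function.update_of_ne hii] at hzi
            apply ih
            have e1 := hms (Function.update z i₁ 1) i (u * z i)
            have e2 := hms z i₁ 1
            have h3 : (Function.update z i₁ 1) i = z i := Function.update_of_ne hii _ _
            have h4 : wt (u * z i) ≤ 1 := by
              refine wt_mem _ ?_
              exact Ideal.mul_mem_right (z i) _ (hU hu)
            have h5 : wt (z i₁) = 1 := wt_eq_one_of _ hne hzm
            have h6 : wt (z i) = 1 := wt_eq_one_of _ hzi (hb i hzi)
            rw [h3] at e1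
            omega
          rw [hdecomp, hFu, hFy, add_zero]
  apply hF0
  apply MultilinearMap.ext
  intro z
  simpa using claimC _ z le_rfl
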